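/- An odd positive integer k is the cardinality of the group of units of some commutative ring if and only if k is of the form ∏_{i=1}^t (2^{n_i} − 1) for some positive integers n₁, …, n_t. -/

import Mathlib

/-- Units of a pi type. -/
def myPiUnits {ι : Type*} {M : ι → Type*} [∀ i, Monoid (M i)] :
    (∀ i, M i)ˣ ≃* ∀ i, (M i)ˣ where
  toFun u i := ⟨u.val i, u.inv i, congrFun u.val_inv i, congrFun u.inv_val i⟩
  invFun u := ⟨fun i => (u i : M i), fun i => ((u i)⁻¹ : (M i)ˣ),
    funext fun i => (u i).val_inv, funext fun i => (u i).inv_val⟩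
  left_inv u := Units.ext rfl
  right_inv u := funext fun i => Units.ext rfl
  map_mul' u v := rfl

lemma aux_card_pi_units {ι : Type*} [Fintype ι] (M : ι → Type*) [∀ i, Monoid (M i)] :
    Nat.card (∀ i, M i)ˣ = ∏ i, Nat.card (M i)ˣ := by
  rw [Nat.card_congr (myPiUnits (M := M)).toEquiv, Nat.card_pi]

/-- If a finite commutative ring of characteristic 2 has a unit group of odd order,
it is reduced. -/
lemma aux_reduced (S : Type*) [CommRing S] [Finite S] [CharP S 2]
    (hodd : Odd (Nat.card Sˣ)) : IsReduced S := by
  constructor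
  intro x hx
  obtain ⟨m, hm⟩ := hx
  have hx2 : x ^ (2 ^ m) = 0 := by
    have hle : m ≤ 2 ^ m := Nat.le_of_lt (Nat.lt_two_pow_self (n := m))
    calc x ^ (2 ^ m) = x ^ m * x ^ (2 ^ m - m) := by
          rw [← pow_add, Nat.add_sub_cancel' hle]
      _ = 0 := by rw [hm, zero_mul]
  have hu : IsUnit (1 + x) := IsNilpotent.isUnit_one_add ⟨m, hm⟩
  obtain ⟨u, hu⟩ := hu
  have hpow : u ^ (2 ^ m) = 1 := by
    ext
    push_cast [hu]
    rw [add_pow_char_pow, one_pow, hx2, add_zero]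
  have h1 : orderOf u ∣ 2 ^ m := orderOf_dvd_of_pow_eq_one hpow
  have h2 : orderOf u ∣ Nat.card Sˣ := orderOf_dvd_natCard u
  have hcop : Nat.Coprime (2 ^ m) (Nat.card Sˣ) :=
    Nat.Coprime.pow_left _ (Nat.coprime_two_left.mpr hodd)
  have : orderOf u = 1 := Nat.eq_one_of_dvd_coprimes hcop h1 h2
  have hu1 : u = 1 := orderOf_eq_one_iff.mp this
  have : (1 : S) + x = 1 := by rw [← hu, hu1, Units.val_one]
  linear_combination this

/-- Forward direction for a *finite* ring. -/
lemma aux_finite_case (S : Type*) [CommRing S] [Finite S] [CharP S 2]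
    (k : ℕ) (hcard : Nat.card Sˣ = k) (hodd : Odd k) :
    ∃ (t : ℕ) (n : Fin t → ℕ), (∀ i, 0 < n i) ∧ k = ∏ i, (2 ^ n i - 1) := by
  have hred : IsReduced S := aux_reduced S (hcard ▸ hodd)
  haveI : IsArtinianRing S := inferInstance
  haveI := (IsArtinianRing.setOfPred_isMaximal_finite S).to_subtype
  set ι := MaximalSpectrum S
  haveI : Fintype ι := Fintype.ofFinite ι
  -- each quotient is a finite field of characteristic 2
  haveI hFin : ∀ I : ι, Finite (S ⧸ I.1) := fun I =>
    Finite.of_surjective _ (Ideal.Quotient.mk_surjective (I := I.1))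
  have hchar : ∀ I : ι, CharP (S ⧸ I.1) 2 := fun I =>
    CharP.quotient' 2 I.1 (by
      intro x hx
      rw [CharP.cast_eq_mod S 2] at hx ⊢
      rcases Nat.mod_two_eq_zero_or_one x with h | h <;> rw [h] at hx ⊢
      · simp
      · exfalso
        simp only [Nat.cast_one] at hx
        exact I.2.ne_top ((Ideal.eq_top_iff_one _).mpr hx))
  -- get the cardinalities
  have hcards : ∀ I : ι, ∃ nI : ℕ, 0 < nI ∧ Nat.card (S ⧸ I.1)ˣ = 2 ^ nI - 1 := by
    intro I
    haveI := hchar I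
    letI := IsArtinianRing.fieldOfSubtypeIsMaximal S I
    haveI : Fintype (S ⧸ I.1) := Fintype.ofFinite _
    obtain ⟨nI, -, hnI⟩ := FiniteField.card (S ⧸ I.1) 2
    refine ⟨nI, nI.2, ?_⟩
    rw [Nat.card_units, Nat.card_eq_fintype_card, hnI]
  choose N hNpos hNcard using hcards
  -- count units via the product decomposition
  have e := IsArtinianRing.equivPi S
  have hk' : k = ∏ I : ι, (2 ^ N I - 1) := by
    rw [← hcard, Nat.card_congr (Units.mapEquiv e.toMulEquiv).toEquiv,
      aux_card_pi_units]
    exact Finset.prod_congr rfl fun I _ => hNcard I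
  -- reindex over `Fin t`
  obtain ⟨g⟩ : Nonempty (ι ≃ Fin (Fintype.card ι)) := ⟨Fintype.equivFin ι⟩
  refine ⟨Fintype.card ι, fun i => N (g.symm i), fun i => hNpos _, ?_⟩
  rw [hk']
  exact (Equiv.prod_comp g.symm fun I => 2 ^ N I - 1).symm

theorem odd_card_units_iff
    (k : ℕ) (hk : 0 < k) (hodd : Odd k) :
    (∃ (R : Type) (_ : CommRing R), Nat.card Rˣ = k) ↔
      (∃ (t : ℕ) (n : Fin t → ℕ), (∀ i, 0 < n i) ∧
        k = ∏ i, (2 ^ n i - 1)) := by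
  constructor
  · rintro ⟨R, _, hcard⟩
    haveI : Finite Rˣ := (Nat.card_pos_iff.mp (hcard ▸ hk)).2
    -- the ring has `-1 = 1`
    have hneg : (-1 : Rˣ) = 1 := by
      have h1 : orderOf (-1 : Rˣ) ∣ 2 := orderOf_dvd_of_pow_eq_one (by simp)
      have h2 : orderOf (-1 : Rˣ) ∣ k := hcard ▸ orderOf_dvd_natCard _
      have : orderOf (-1 : Rˣ) = 1 :=
        Nat.eq_one_of_dvd_coprimes ((Nat.coprime_two_left.mpr hodd)) h1 h2
      exact orderOf_eq_one_iff.mp this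
    have h2R : (2 : R) = 0 := by
      have := congrArg (Units.val) hneg
      push_cast at this
      linear_combination -this
    by_cases hS : Subsingleton R
    · -- trivial ring: k = 1, take t = 0
      have : Nat.card Rˣ = 1 := Nat.card_unique
      refine ⟨0, fun i => 1, fun i => one_pos, ?_⟩
      simp [← hcard, this]
    · haveI : Nontrivial R := not_subsingleton_iff_nontrivial.mp hS
      have hring : ringChar R = 2 := by
        have hdvd : ringChar R ∣ 2 := ringChar.dvd (by exact_mod_cast h2R)
        rcases (Nat.dvd_prime Nat.prime_two).mp hdvd with h | h
        · exact absurd h CharP.ringChar_ne_one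
        · exact h
      haveI : CharP R 2 := hring ▸ ringChar.charP R
      haveI : Fact (Nat.Prime 2) := ⟨Nat.prime_two⟩
      letI : Algebra (ZMod 2) R := ZMod.algebra R 2
      -- the subring generated by the units via the group algebra
      let f : MonoidAlgebra (ZMod 2) Rˣ →+* R :=
        (MonoidAlgebra.lift (ZMod 2) R Rˣ (Units.coeHom R)).toRingHom
      haveI : Finite (MonoidAlgebra (ZMod 2) Rˣ) :=
        Finite.of_injective _ ((DFunLike.coe_injective : Function.Injective ((⇑) : (Rˣ →₀ ZMod 2) → (Rˣ → ZMod 2))).comp MonoidAlgebra.coeff_injective)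
      let S : Subring R := f.range
      haveI : Finite S := Set.Finite.to_subtype (Set.finite_range f)
      have hmem : ∀ u : Rˣ, (u : R) ∈ S := fun u =>
        ⟨MonoidAlgebra.of (ZMod 2) Rˣ u, by simp [f]⟩
      -- units of S ≃ units of R
      have hbij : Function.Bijective (Units.map (S.subtype : S →* R)) := by
        constructor
        · exact Units.map_injective Subtype.val_injective
        · intro u
          refine ⟨⟨⟨(u : R), hmem u⟩, ⟨((u⁻¹ : Rˣ) : R), hmem u⁻¹⟩,
            Subtype.ext (by simp), Subtype.ext (by simp)⟩, Units.ext rfl⟩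
      have hScard : Nat.card Sˣ = k := by
        rw [← hcard]; exact Nat.card_congr (Equiv.ofBijective _ hbij)
      exact aux_finite_case S k hScard hodd
  · rintro ⟨t, n, hn, rfl⟩
    haveI : Fact (Nat.Prime 2) := ⟨Nat.prime_two⟩
    refine ⟨∀ i, GaloisField 2 (n i), inferInstance, ?_⟩
    rw [aux_card_pi_units]
    refine Finset.prod_congr rfl fun i _ => ?_
    rw [Nat.card_units, GaloisField.card 2 (n i) (hn i).ne']
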